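/- Every odd positive integer can be written as a sum of four squares of integers whose gcd is 1. -/

import Mathlib

open Quaternion

namespace OddFourSq

abbrev qi : ℍ[ℤ] := ⟨0, 1, 0, 0⟩
abbrev qj : ℍ[ℤ] := ⟨0, 0, 1, 0⟩
abbrev qk : ℍ[ℤ] := ⟨0, 0, 0, 1⟩

lemma four_re : (4 : ℍ[ℤ]).re = 4 := rfl
lemma four_imI : (4 : ℍ[ℤ]).imI = 0 := rfl
lemma four_imJ : (4 : ℍ[ℤ]).imJ = 0 := rfl
lemma four_imK : (4 : ℍ[ℤ]).imK = 0 := rfl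

lemma normSq_qi : normSq qi = 1 := by simp [normSq_def']
lemma normSq_qj : normSq qj = 1 := by simp [normSq_def']
lemma normSq_qk : normSq qk = 1 := by simp [normSq_def']

lemma intCast_dvd_iff (n : ℤ) (q : ℍ[ℤ]) :
    (n : ℍ[ℤ]) ∣ q ↔ n ∣ q.re ∧ n ∣ q.imI ∧ n ∣ q.imJ ∧ n ∣ q.imK := by
  constructor
  · rintro ⟨c, rfl⟩
    refine ⟨⟨c.re, ?_⟩, ⟨c.imI, ?_⟩, ⟨c.imJ, ?_⟩, ⟨c.imK, ?_⟩⟩ <;>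
      simp [Quaternion.re_mul, Quaternion.imI_mul, Quaternion.imJ_mul, Quaternion.imK_mul,
        QuaternionAlgebra.re_intCast, QuaternionAlgebra.imI_intCast,
        QuaternionAlgebra.imJ_intCast, QuaternionAlgebra.imK_intCast]
  · rintro ⟨⟨r1, h1⟩, ⟨r2, h2⟩, ⟨r3, h3⟩, ⟨r4, h4⟩⟩
    obtain ⟨c, e1, e2, e3, e4⟩ : ∃ c : ℍ[ℤ], c.re = r1 ∧ c.imI = r2 ∧ c.imJ = r3 ∧ c.imK = r4 :=
      ⟨⟨r1, r2, r3, r4⟩, rfl, rfl, rfl, rfl⟩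
    refine ⟨c, ?_⟩
    ext <;>
      simp [e1, e2, e3, e4, h1, h2, h3, h4, Quaternion.re_mul, Quaternion.imI_mul, Quaternion.imJ_mul,
        Quaternion.imK_mul, QuaternionAlgebra.re_intCast, QuaternionAlgebra.imI_intCast,
        QuaternionAlgebra.imJ_intCast, QuaternionAlgebra.imK_intCast]

lemma extract_re (α ρ : ℍ[ℤ]) :
    ((4 * ρ.re : ℤ) : ℍ[ℤ]) * α =
      α * ρ - (α * (qi * ρ)) * qi - (α * (qj * ρ)) * qj - (α * (qk * ρ)) * qk := by
  ext <;>
    simp [Quaternion.re_mul, Quaternion.imI_mul, Quaternion.imJ_mul, Quaternion.imK_mul,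
      QuaternionAlgebra.re_intCast, QuaternionAlgebra.imI_intCast,
      QuaternionAlgebra.imJ_intCast, QuaternionAlgebra.imK_intCast,
      four_re, four_imI, four_imJ, four_imK] <;> ring

lemma extract_imI (α ρ : ℍ[ℤ]) :
    ((4 * ρ.imI : ℤ) : ℍ[ℤ]) * α =
      (α * ρ - (α * (qi * ρ)) * qi + (α * (qj * ρ)) * qj + (α * (qk * ρ)) * qk) * (-qi) := by
  ext <;>
    simp [Quaternion.re_mul, Quaternion.imI_mul, Quaternion.imJ_mul, Quaternion.imK_mul,
      QuaternionAlgebra.re_intCast, QuaternionAlgebra.imI_intCast,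
      QuaternionAlgebra.imJ_intCast, QuaternionAlgebra.imK_intCast,
      four_re, four_imI, four_imJ, four_imK] <;> ring

lemma extract_imJ (α ρ : ℍ[ℤ]) :
    ((4 * ρ.imJ : ℤ) : ℍ[ℤ]) * α =
      (α * ρ + (α * (qi * ρ)) * qi - (α * (qj * ρ)) * qj + (α * (qk * ρ)) * qk) * (-qj) := by
  ext <;>
    simp [Quaternion.re_mul, Quaternion.imI_mul, Quaternion.imJ_mul, Quaternion.imK_mul,
      QuaternionAlgebra.re_intCast, QuaternionAlgebra.imI_intCast,
      QuaternionAlgebra.imJ_intCast, QuaternionAlgebra.imK_intCast,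
      four_re, four_imI, four_imJ, four_imK] <;> ring

lemma extract_imK (α ρ : ℍ[ℤ]) :
    ((4 * ρ.imK : ℤ) : ℍ[ℤ]) * α =
      (α * ρ + (α * (qi * ρ)) * qi + (α * (qj * ρ)) * qj - (α * (qk * ρ)) * qk) * (-qk) := by
  ext <;>
    simp [Quaternion.re_mul, Quaternion.imI_mul, Quaternion.imJ_mul, Quaternion.imK_mul,
      QuaternionAlgebra.re_intCast, QuaternionAlgebra.imI_intCast,
      QuaternionAlgebra.imJ_intCast, QuaternionAlgebra.imK_intCast,
      four_re, four_imI, four_imJ, four_imK] <;> ring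

lemma no_p {P : ℤ} (hp : Prime P) (hp4 : ¬ P ∣ (4 : ℤ)) (α : ℍ[ℤ]) (c0 : ℤ)
    (hc0 : ¬ P ∣ c0) (h : (P : ℍ[ℤ]) ∣ ((4 * c0 : ℤ) : ℍ[ℤ]) * α) :
    P ∣ α.re ∧ P ∣ α.imI ∧ P ∣ α.imJ ∧ P ∣ α.imK := by
  rw [intCast_dvd_iff] at h
  obtain ⟨h1, h2, h3, h4⟩ := h
  have comp_re : (((4 * c0 : ℤ) : ℍ[ℤ]) * α).re = 4 * c0 * α.re := by
    simp [Quaternion.re_mul, QuaternionAlgebra.re_intCast, QuaternionAlgebra.imI_intCast,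
      QuaternionAlgebra.imJ_intCast, QuaternionAlgebra.imK_intCast,
      four_re, four_imI, four_imJ, four_imK]
  have comp_imI : (((4 * c0 : ℤ) : ℍ[ℤ]) * α).imI = 4 * c0 * α.imI := by
    simp [Quaternion.imI_mul, QuaternionAlgebra.re_intCast, QuaternionAlgebra.imI_intCast,
      QuaternionAlgebra.imJ_intCast, QuaternionAlgebra.imK_intCast,
      four_re, four_imI, four_imJ, four_imK]
  have comp_imJ : (((4 * c0 : ℤ) : ℍ[ℤ]) * α).imJ = 4 * c0 * α.imJ := by
    simp [Quaternion.imJ_mul, QuaternionAlgebra.re_intCast, QuaternionAlgebra.imI_intCast,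
      QuaternionAlgebra.imJ_intCast, QuaternionAlgebra.imK_intCast,
      four_re, four_imI, four_imJ, four_imK]
  have comp_imK : (((4 * c0 : ℤ) : ℍ[ℤ]) * α).imK = 4 * c0 * α.imK := by
    simp [Quaternion.imK_mul, QuaternionAlgebra.re_intCast, QuaternionAlgebra.imI_intCast,
      QuaternionAlgebra.imJ_intCast, QuaternionAlgebra.imK_intCast,
      four_re, four_imI, four_imJ, four_imK]
  rw [comp_re] at h1; rw [comp_imI] at h2; rw [comp_imJ] at h3; rw [comp_imK] at h4
  have hmul : ∀ t : ℤ, P ∣ 4 * c0 * t → P ∣ t := by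
    intro t ht
    rcases hp.dvd_mul.mp ht with h' | h'
    · rcases hp.dvd_mul.mp h' with h'' | h''
      · exact absurd h'' hp4
      · exact absurd h'' hc0
    · exact h'
  exact ⟨hmul _ h1, hmul _ h2, hmul _ h3, hmul _ h4⟩

theorem aux : ∀ m : ℕ, 0 < m → Odd m →
    ∃ a b c d : ℤ, a ^ 2 + b ^ 2 + c ^ 2 + d ^ 2 = (m : ℤ) ∧
      Int.gcd a (Int.gcd b (Int.gcd c d)) = 1 := by
  intro m
  induction m using Nat.strong_induction_on with
  | _ m ih =>
  intro hm hodd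
  rcases Nat.lt_or_ge m 2 with h1 | h1
  · have hm1 : m = 1 := by omega
    subst hm1
    exact ⟨1, 0, 0, 0, by norm_num, by decide⟩
  · -- m ≥ 2
    have hpp : Nat.Prime m.minFac := Nat.minFac_prime (by omega)
    set p := m.minFac with hpdef
    obtain ⟨n, hmn⟩ : p ∣ m := Nat.minFac_dvd m
    have hp2 : p ≠ 2 := by
      intro h
      have h2 : (2 : ℕ) ∣ m := h ▸ Nat.minFac_dvd m
      rw [Nat.odd_iff] at hodd
      omega
    have hn0 : 0 < n := by
      rcases Nat.eq_zero_or_pos n with rfl | h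
      · omega
      · exact h
    have hnm : n < m := by nlinarith [hpp.two_le]
    have hnodd : Odd n := by
      rcases Nat.even_or_odd n with he | ho
      · have hev : Even m := hmn ▸ he.mul_left p
        rw [Nat.even_iff] at hev
        rw [Nat.odd_iff] at hodd
        omega
      · exact ho
    obtain ⟨x, y, z, w, hsum, hgcd⟩ := ih n hnm hn0 hnodd
    obtain ⟨a, b, c, d, habcd⟩ := hpp.sum_four_squares
    set α : ℍ[ℤ] := ⟨(a : ℤ), (b : ℤ), (c : ℤ), (d : ℤ)⟩ with hα
    set ρ : ℍ[ℤ] := ⟨x, y, z, w⟩ with hρ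
    have hpz : Prime ((p : ℕ) : ℤ) := Nat.prime_iff_prime_int.mp hpp
    have hp0 : (0 : ℤ) < (p : ℤ) := by exact_mod_cast hpp.pos
    have hp2' : (2 : ℕ) ≤ p := hpp.two_le
    have hnormα : normSq α = (p : ℤ) := by
      rw [normSq_def']
      show (a : ℤ) ^ 2 + (b : ℤ) ^ 2 + (c : ℤ) ^ 2 + (d : ℤ) ^ 2 = (p : ℤ)
      exact_mod_cast congrArg (Nat.cast : ℕ → ℤ) habcd
    have hnormρ : normSq ρ = (n : ℤ) := by
      rw [normSq_def']; exact hsum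
    have hp4 : ¬ ((p : ℤ) ∣ 4) := by
      intro h
      have h' : p ∣ 4 := by exact_mod_cast h
      have h4 : (4 : ℕ) = 2 ^ 2 := rfl
      rw [h4] at h'
      have hd2 : p ∣ 2 := hpp.dvd_of_dvd_pow h'
      have := Nat.le_of_dvd (by norm_num) hd2
      omega
    have hρnotall : ¬(((p : ℤ) ∣ x) ∧ ((p : ℤ) ∣ y) ∧ ((p : ℤ) ∣ z) ∧ ((p : ℤ) ∣ w)) := by
      rintro ⟨d1, d2, d3, d4⟩
      have hd : ((p : ℤ)) ∣ ((Int.gcd x (Int.gcd y (Int.gcd z w)) : ℕ) : ℤ) :=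
        Int.dvd_coe_gcd d1 (Int.dvd_coe_gcd d2 (Int.dvd_coe_gcd d3 d4))
      rw [hgcd] at hd
      have := Int.le_of_dvd one_pos hd
      have : (2 : ℤ) ≤ (p : ℤ) := by exact_mod_cast hp2'
      omega
    have key : ∃ u : ℍ[ℤ], normSq u = 1 ∧ ¬ (((p : ℤ) : ℍ[ℤ]) ∣ α * (u * ρ)) := by
      by_contra hcon
      push_neg at hcon
      have h1 : ((p : ℤ) : ℍ[ℤ]) ∣ α * ρ := by
        have := hcon 1 (map_one normSq)
        rwa [one_mul] at this
      have h2 : ((p : ℤ) : ℍ[ℤ]) ∣ α * (qi * ρ) := hcon qi normSq_qi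
      have h3 : ((p : ℤ) : ℍ[ℤ]) ∣ α * (qj * ρ) := hcon qj normSq_qj
      have h4 : ((p : ℤ) : ℍ[ℤ]) ∣ α * (qk * ρ) := hcon qk normSq_qk
      have t2 : ((p : ℤ) : ℍ[ℤ]) ∣ (α * (qi * ρ)) * qi := h2.mul_right qi
      have t3 : ((p : ℤ) : ℍ[ℤ]) ∣ (α * (qj * ρ)) * qj := h3.mul_right qj
      have t4 : ((p : ℤ) : ℍ[ℤ]) ∣ (α * (qk * ρ)) * qk := h4.mul_right qk
      have main : (p : ℤ) ∣ α.re ∧ (p : ℤ) ∣ α.imI ∧ (p : ℤ) ∣ α.imJ ∧ (p : ℤ) ∣ α.imK := by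
        have hor : ¬ ((p : ℤ) ∣ x) ∨ ¬ ((p : ℤ) ∣ y) ∨ ¬ ((p : ℤ) ∣ z) ∨ ¬ ((p : ℤ) ∣ w) := by
          tauto
        rcases hor with hc | hc | hc | hc
        · refine no_p hpz hp4 α ρ.re hc ?_
          rw [extract_re α ρ]
          exact ((h1.sub t2).sub t3).sub t4
        · refine no_p hpz hp4 α ρ.imI hc ?_
          rw [extract_imI α ρ]
          exact (((h1.sub t2).add t3).add t4).mul_right (-qi)
        · refine no_p hpz hp4 α ρ.imJ hc ?_
          rw [extract_imJ α ρ]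
          exact (((h1.add t2).sub t3).add t4).mul_right (-qj)
        · refine no_p hpz hp4 α ρ.imK hc ?_
          rw [extract_imK α ρ]
          exact (((h1.add t2).add t3).sub t4).mul_right (-qk)
      obtain ⟨⟨a', ha'⟩, ⟨b', hb'⟩, ⟨c', hc'⟩, ⟨d', hd'⟩⟩ := main
      have hdv : (p : ℤ) * (p : ℤ) ∣ (p : ℤ) := by
        refine ⟨a' ^ 2 + b' ^ 2 + c' ^ 2 + d' ^ 2, ?_⟩
        have hsq : (p : ℤ) = α.re ^ 2 + α.imI ^ 2 + α.imJ ^ 2 + α.imK ^ 2 := by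
          rw [← normSq_def', hnormα]
        conv_lhs => rw [hsq]
        rw [ha', hb', hc', hd']; ring
      have := Int.le_of_dvd hp0 hdv
      have hple : (2 : ℤ) ≤ (p : ℤ) := by exact_mod_cast hp2'
      nlinarith
    obtain ⟨u, hu1, hu2⟩ := key
    have hQm : normSq (α * (u * ρ)) = (m : ℤ) := by
      rw [map_mul, map_mul, hnormα, hu1, hnormρ, hmn]
      push_cast
      ring
    refine ⟨(α * (u * ρ)).re, (α * (u * ρ)).imI, (α * (u * ρ)).imJ, (α * (u * ρ)).imK, ?_, ?_⟩
    · rw [← hQm, normSq_def']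
    · by_contra hgne
      set g := Int.gcd (α * (u * ρ)).re (Int.gcd (α * (u * ρ)).imI
        (Int.gcd (α * (u * ρ)).imJ (α * (u * ρ)).imK)) with hg
      have hg0 : g ≠ 0 := by
        intro h0
        rw [hg, Int.gcd_eq_zero_iff] at h0
        obtain ⟨e1, h0'⟩ := h0
        rw [Nat.cast_eq_zero, Int.gcd_eq_zero_iff] at h0'
        obtain ⟨e2, h0''⟩ := h0'
        rw [Nat.cast_eq_zero, Int.gcd_eq_zero_iff] at h0''
        obtain ⟨e3, e4⟩ := h0''
        have : normSq (α * (u * ρ)) = 0 := by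
          rw [normSq_def']
          show (α * (u * ρ)).re ^ 2 + (α * (u * ρ)).imI ^ 2 + (α * (u * ρ)).imJ ^ 2 +
            (α * (u * ρ)).imK ^ 2 = 0
          rw [e1, e2, e3, e4]; ring
        rw [hQm] at this
        have : m = 0 := by exact_mod_cast this
        omega
      have hrprime : g.minFac.Prime := Nat.minFac_prime hgne
      set r := g.minFac with hr
      have hrg : (r : ℤ) ∣ (g : ℤ) := Int.natCast_dvd_natCast.mpr (Nat.minFac_dvd g)
      have hgd : ((g : ℕ) : ℤ) ∣ (α * (u * ρ)).re ∧ ((g : ℕ) : ℤ) ∣ (α * (u * ρ)).imI ∧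
          ((g : ℕ) : ℤ) ∣ (α * (u * ρ)).imJ ∧ ((g : ℕ) : ℤ) ∣ (α * (u * ρ)).imK := by
        rw [hg]
        refine ⟨Int.gcd_dvd_left _ _, ?_, ?_, ?_⟩
        · exact (Int.gcd_dvd_right _ _).trans (Int.gcd_dvd_left _ _)
        · exact (Int.gcd_dvd_right _ _).trans ((Int.gcd_dvd_right _ _).trans (Int.gcd_dvd_left _ _))
        · exact (Int.gcd_dvd_right _ _).trans ((Int.gcd_dvd_right _ _).trans (Int.gcd_dvd_right _ _))
      have d1 : (r : ℤ) ∣ (α * (u * ρ)).re := hrg.trans hgd.1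
      have d2 : (r : ℤ) ∣ (α * (u * ρ)).imI := hrg.trans hgd.2.1
      have d3 : (r : ℤ) ∣ (α * (u * ρ)).imJ := hrg.trans hgd.2.2.1
      have d4 : (r : ℤ) ∣ (α * (u * ρ)).imK := hrg.trans hgd.2.2.2
      have hQdvd : ((r : ℤ) : ℍ[ℤ]) ∣ α * (u * ρ) :=
        (intCast_dvd_iff _ _).mpr ⟨d1, d2, d3, d4⟩
      have hkey : star (α * u) * (α * (u * ρ)) = ((p : ℤ)) • ρ := by
        rw [← mul_assoc α u ρ, ← mul_assoc, star_mul_self, map_mul, hnormα, hu1, mul_one,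
          coe_mul_eq_smul]
      have hdq : ((r : ℤ) : ℍ[ℤ]) ∣ ((p : ℤ)) • ρ := by
        obtain ⟨cq, hcq⟩ := hQdvd
        refine ⟨star (α * u) * cq, ?_⟩
        rw [← hkey, hcq, ((Int.cast_commute ((r : ℕ) : ℤ)
          (star (α * u))).symm).left_comm]
      rw [intCast_dvd_iff] at hdq
      obtain ⟨e1, e2, e3, e4⟩ := hdq
      have s1 : (r : ℤ) ∣ (p : ℤ) * x := by
        have : ((p : ℤ) • ρ).re = (p : ℤ) * x := rfl
        rwa [this] at e1
      have s2 : (r : ℤ) ∣ (p : ℤ) * y := by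
        have : ((p : ℤ) • ρ).imI = (p : ℤ) * y := rfl
        rwa [this] at e2
      have s3 : (r : ℤ) ∣ (p : ℤ) * z := by
        have : ((p : ℤ) • ρ).imJ = (p : ℤ) * z := rfl
        rwa [this] at e3
      have s4 : (r : ℤ) ∣ (p : ℤ) * w := by
        have : ((p : ℤ) • ρ).imK = (p : ℤ) * w := rfl
        rwa [this] at e4
      by_cases hrp : r = p
      · rw [hrp] at hQdvd
        exact hu2 hQdvd
      · have hrzp : ¬ (r : ℤ) ∣ (p : ℤ) := by
          intro hd
          have hd' : r ∣ p := by exact_mod_cast hd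
          rcases (Nat.Prime.eq_one_or_self_of_dvd hpp r hd') with h' | h'
          · exact hrprime.one_lt.ne' h'
          · exact hrp h'
        have hrz : Prime ((r : ℕ) : ℤ) := Nat.prime_iff_prime_int.mp hrprime
        have rx : (r : ℤ) ∣ x := (hrz.dvd_mul.mp s1).resolve_left hrzp
        have ry : (r : ℤ) ∣ y := (hrz.dvd_mul.mp s2).resolve_left hrzp
        have rz : (r : ℤ) ∣ z := (hrz.dvd_mul.mp s3).resolve_left hrzp
        have rw' : (r : ℤ) ∣ w := (hrz.dvd_mul.mp s4).resolve_left hrzp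
        have hd : ((r : ℤ)) ∣ ((Int.gcd x (Int.gcd y (Int.gcd z w)) : ℕ) : ℤ) :=
          Int.dvd_coe_gcd rx (Int.dvd_coe_gcd ry (Int.dvd_coe_gcd rz rw'))
        rw [hgcd] at hd
        have h1' := Int.le_of_dvd one_pos hd
        have h2' : (2 : ℤ) ≤ (r : ℤ) := by exact_mod_cast hrprime.two_le
        omega

end OddFourSq

theorem odd_eq_sum_four_squares_coprime (m : ℕ) (hm : 0 < m) (hodd : Odd m) :
    ∃ a b c d : ℤ, a ^ 2 + b ^ 2 + c ^ 2 + d ^ 2 = (m : ℤ) ∧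
      Int.gcd a (Int.gcd b (Int.gcd c d)) = 1 := OddFourSq.aux m hm hodd
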